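/- Let Z satisfy 𝔓(Z > 0) = 1, 0 < E[Z] < ∞ and E[|log Z|] < ∞, and let g : (0,∞) → (0,∞) satisfy the optimal power-adaptation constraint E[(1/g(S) − 1/Z)·1{Z > g(S)}] = S for every S > 0. Then C_OA(S) − C_RA(S) → 0 as S → ∞, where C_OA(S) = E[log(Z/g(S))·1{Z > g(S)}] and C_RA(S) = E[log(1 + S·Z)]. That is, rate adaptation with constant power is asymptotically optimal at high average SNR. -/

import Mathlib

open MeasureTheory Filter Topology

set_option maxHeartbeats 1000000

/-- **Rate adaptation is asymptotically optimal at high SNR.** Let `Z` satisfy `P(Z > 0) = 1`,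
`0 < E[Z] < ∞` and `E[|log Z|] < ∞`, and let `g : (0,∞) → (0,∞)` satisfy the optimal
power-adaptation constraint `E[(1/g(S) − 1/Z)·1{Z > g(S)}] = S` for every `S > 0`. Then
`C_OA(S) − C_RA(S) → 0` as `S → ∞`, where `C_OA(S) = E[log(Z/g(S))·1{Z > g(S)}]` and
`C_RA(S) = E[log(1 + S·Z)]`. -/
theorem oa_sub_ra_tendsto_zero
    {Ω : Type*} [MeasurableSpace Ω] (P : Measure Ω) [IsProbabilityMeasure P]
    (Z : Ω → ℝ) (hZ : Measurable Z) (hZpos : P {ω | 0 < Z ω} = 1)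
    (hZ_int : Integrable Z P) (hZ_mean_pos : 0 < ∫ ω, Z ω ∂P)
    (hlog_int : Integrable (fun ω => |Real.log (Z ω)|) P)
    (g : ℝ → ℝ) (hgpos : ∀ S, 0 < S → 0 < g S)
    (hg : ∀ S, 0 < S →
      ∫ ω, (if g S < Z ω then (g S)⁻¹ - (Z ω)⁻¹ else 0) ∂P = S) :
    Tendsto (fun S =>
        (∫ ω, (if g S < Z ω then Real.log (Z ω / g S) else 0) ∂P)
          - ∫ ω, Real.log (1 + S * Z ω) ∂P)
      atTop (𝓝 0) := by
  classical
  -- a.e. positivity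
  have hZset : MeasurableSet {ω | 0 < Z ω} := measurableSet_lt measurable_const hZ
  have hae : ∀ᵐ ω ∂P, 0 < Z ω := by
    rw [ae_iff]
    have h1 : {ω | ¬ 0 < Z ω} = {ω | 0 < Z ω}ᶜ := rfl
    rw [h1, measure_compl hZset (measure_ne_top _ _), hZpos, measure_univ]
    simp
  have hlogm : Measurable fun ω => Real.log (Z ω) := Real.measurable_log.comp hZ
  have hlogZ_int : Integrable (fun ω => Real.log (Z ω)) P := by
    rw [← integrable_norm_iff hlogm.aestronglyMeasurable]
    simpa [Real.norm_eq_abs] using hlog_int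
  -- integrability of bounded measurable functions
  have hbdd : ∀ (f : Ω → ℝ) (C : ℝ), Measurable f → (∀ ω, ‖f ω‖ ≤ C) → Integrable f P :=
    fun f C hf h =>
      (integrable_const C).mono' hf.aestronglyMeasurable (Eventually.of_forall h)
  -- g S ≤ S⁻¹
  have hgle : ∀ S, 0 < S → g S ≤ S⁻¹ := by
    intro S hS
    have hgS := hgpos S hS
    have hmono : S ≤ (g S)⁻¹ := by
      have hle : ∫ ω, (if g S < Z ω then (g S)⁻¹ - (Z ω)⁻¹ else 0) ∂P
          ≤ ∫ _ω, (g S)⁻¹ ∂P := by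
        apply integral_mono_of_nonneg
        · filter_upwards with ω
          simp only [Pi.zero_apply]
          by_cases h : g S < Z ω
          · have h2 : (Z ω)⁻¹ ≤ (g S)⁻¹ := by
              apply inv_anti₀ hgS h.le
            simp only [h, if_true]
            linarith
          · simp [h]
        · exact integrable_const _
        · filter_upwards with ω
          by_cases h : g S < Z ω
          · have h0 : 0 < (Z ω)⁻¹ := inv_pos.mpr (hgS.trans h)
            simp only [h, if_true]
            linarith
          · simp only [h, if_false]
            positivity
      rwa [hg S hS, integral_const, probReal_univ, one_smul] at hle
    exact (le_inv_comm₀ hS hgS).mp hmono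
  have hA : ∀ S : ℝ, MeasurableSet {ω | g S < Z ω} :=
    fun S => measurableSet_lt measurable_const hZ
  -- indicator integrals
  have hind : ∀ (S c : ℝ), ∫ ω, (if g S < Z ω then c else 0) ∂P
      = (P {ω | g S < Z ω}).toReal * c := by
    intro S c
    have h1 : ∀ ω, (if g S < Z ω then c else 0)
        = Set.indicator {ω | g S < Z ω} (fun _ => c) ω := by
      intro ω
      rw [Set.indicator_apply]
      rfl
    rw [integral_congr_ae (Eventually.of_forall h1), integral_indicator_const c (hA S)]
    simp [mul_comm, Measure.real]
  -- tendsto of H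
  have hHH : Tendsto (fun S => ∫ ω, (if 0 < Z ω then min 1 (S * Z ω)⁻¹ else 0) ∂P)
      atTop (𝓝 0) := by
    have key := tendsto_integral_filter_of_dominated_convergence (μ := P)
      (F := fun (S : ℝ) ω => if 0 < Z ω then min 1 (S * Z ω)⁻¹ else 0)
      (f := fun _ => (0:ℝ)) (bound := fun _ => (1:ℝ)) (l := atTop)
      ?_ ?_ (integrable_const 1) ?_
    · simpa using key
    · filter_upwards with S
      apply Measurable.aestronglyMeasurable
      exact Measurable.ite hZset (measurable_const.min (measurable_const.mul hZ).inv)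
        measurable_const
    · filter_upwards [eventually_ge_atTop (1:ℝ)] with S hS1
      filter_upwards with ω
      by_cases h : 0 < Z ω
      · have hSZ : 0 < S * Z ω := mul_pos (lt_of_lt_of_le one_pos hS1) h
        have h2 : 0 ≤ min 1 (S * Z ω)⁻¹ := le_min one_pos.le (inv_pos.mpr hSZ).le
        simp only [h, if_true, Real.norm_eq_abs, abs_of_nonneg h2]
        exact min_le_left _ _
      · simp [h]
    · filter_upwards [hae] with ω hz
      simp only [hz, if_true]
      have h1 : Tendsto (fun S : ℝ => (S * Z ω)⁻¹) atTop (𝓝 0) := by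
        apply Tendsto.inv_tendsto_atTop
        exact Tendsto.atTop_mul_const hz tendsto_id
      have h2 := Tendsto.min (tendsto_const_nhds (x := (1:ℝ))) h1
      simpa using h2
  -- tendsto of R
  have hRR : Tendsto (fun S : ℝ => ∫ ω,
      (if 0 < Z ω ∧ Z ω ≤ S⁻¹ then |Real.log (Z ω)| else 0) ∂P) atTop (𝓝 0) := by
    have key := tendsto_integral_filter_of_dominated_convergence (μ := P)
      (F := fun (S : ℝ) ω => if 0 < Z ω ∧ Z ω ≤ S⁻¹ then |Real.log (Z ω)| else 0)
      (f := fun _ => (0:ℝ)) (bound := fun ω => |Real.log (Z ω)|) (l := atTop)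
      ?_ ?_ hlog_int ?_
    · simpa using key
    · filter_upwards with S
      apply Measurable.aestronglyMeasurable
      have hset : MeasurableSet {ω | 0 < Z ω ∧ Z ω ≤ S⁻¹} :=
        hZset.inter (measurableSet_le hZ measurable_const)
      exact Measurable.ite hset hlogm.abs measurable_const
    · filter_upwards with S
      filter_upwards with ω
      by_cases h : 0 < Z ω ∧ Z ω ≤ S⁻¹
      · simp [h, abs_abs, le_refl]
      · simp [h, abs_nonneg]
    · filter_upwards [hae] with ω hz
      have hev : ∀ᶠ S : ℝ in atTop, ¬ (0 < Z ω ∧ Z ω ≤ S⁻¹) := by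
        filter_upwards [tendsto_inv_atTop_zero.eventually_lt_const hz] with S hS
        intro hcon
        exact absurd hcon.2 (not_le.mpr hS)
      apply Tendsto.congr' _ tendsto_const_nhds
      filter_upwards [hev] with S hS
      simp [hS]
  -- tendsto of A4
  have hA4 : Tendsto (fun S : ℝ => ∫ ω, Real.log (1 + (S * Z ω)⁻¹) ∂P) atTop (𝓝 0) := by
    have key := tendsto_integral_filter_of_dominated_convergence (μ := P)
      (F := fun (S : ℝ) ω => Real.log (1 + (S * Z ω)⁻¹))
      (f := fun _ => (0:ℝ)) (bound := fun ω => Z ω + |Real.log (Z ω)|) (l := atTop)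
      ?_ ?_ (hZ_int.add hlog_int) ?_
    · simpa using key
    · filter_upwards with S
      exact (Real.measurable_log.comp
        (measurable_const.add (measurable_const.mul hZ).inv)).aestronglyMeasurable
    · filter_upwards [eventually_ge_atTop (1:ℝ)] with S hS1
      filter_upwards [hae] with ω hz
      have hSZ : 0 < S * Z ω := mul_pos (lt_of_lt_of_le one_pos hS1) hz
      have h1 : (0:ℝ) ≤ Real.log (1 + (S * Z ω)⁻¹) := by
        apply Real.log_nonneg
        have : 0 ≤ (S * Z ω)⁻¹ := (inv_pos.mpr hSZ).le
        linarith
      rw [Real.norm_eq_abs, abs_of_nonneg h1]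
      have h2 : (S * Z ω)⁻¹ ≤ (Z ω)⁻¹ := by
        apply inv_anti₀ hz
        nlinarith
      have h3 : Real.log (1 + (S * Z ω)⁻¹) ≤ Real.log (1 + (Z ω)⁻¹) := by
        apply Real.log_le_log (by positivity)
        linarith
      have h4 : Real.log (1 + (Z ω)⁻¹) = Real.log (1 + Z ω) - Real.log (Z ω) := by
        have : 1 + (Z ω)⁻¹ = (1 + Z ω) / Z ω := by
          field_simp
          ring
        rw [this, Real.log_div (by positivity) hz.ne']
      have h5 : Real.log (1 + Z ω) ≤ Z ω := by
        have := Real.log_le_sub_one_of_pos (x := 1 + Z ω) (by positivity)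
        linarith
      have h6 : -Real.log (Z ω) ≤ |Real.log (Z ω)| := neg_le_abs _
      linarith
    · filter_upwards [hae] with ω hz
      have h1 : Tendsto (fun S : ℝ => (S * Z ω)⁻¹) atTop (𝓝 0) := by
        apply Tendsto.inv_tendsto_atTop
        exact Tendsto.atTop_mul_const hz tendsto_id
      have h2 : Tendsto (fun S : ℝ => 1 + (S * Z ω)⁻¹) atTop (𝓝 1) := by
        simpa using (tendsto_const_nhds (x := (1:ℝ))).add h1
      have h3 := ((Real.continuousAt_log one_ne_zero).tendsto.comp h2)
      simpa [Function.comp_def] using h3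
  -- integrability of the indicator and fraction integrands
  have hint_ind : ∀ S : ℝ, Integrable (fun ω => if g S < Z ω then (1:ℝ) else 0) P := by
    intro S
    apply hbdd _ 1 (Measurable.ite (hA S) measurable_const measurable_const)
    intro ω
    by_cases h : g S < Z ω <;> simp [h]
  have hfrac_bd : ∀ S : ℝ, 0 < S → ∀ ω, g S < Z ω → 0 ≤ g S / Z ω ∧ g S / Z ω ≤ 1 := by
    intro S hS ω h
    have ht := hgpos S hS
    have hz : 0 < Z ω := ht.trans h
    constructor
    · positivity
    · rw [div_le_one hz]
      exact h.le
  have hint_frac : ∀ S : ℝ, 0 < S →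
      Integrable (fun ω => if g S < Z ω then g S / Z ω else 0) P := by
    intro S hS
    apply hbdd _ 1 (Measurable.ite (hA S) (measurable_const.div hZ) measurable_const)
    intro ω
    by_cases h : g S < Z ω
    · obtain ⟨h1, h2⟩ := hfrac_bd S hS ω h
      simp only [h, if_true, Pi.div_apply, Real.norm_eq_abs, abs_of_nonneg h1]
      exact h2
    · simp [h]
  -- the key water-filling identity : p - b = g S * S
  have hkey : ∀ S : ℝ, 0 < S →
      (P {ω | g S < Z ω}).toReal - (∫ ω, (if g S < Z ω then g S / Z ω else 0) ∂P)
        = g S * S := by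
    intro S hS
    have ht := hgpos S hS
    have h1 : g S * S = ∫ ω, g S * (if g S < Z ω then (g S)⁻¹ - (Z ω)⁻¹ else 0) ∂P := by
      rw [integral_const_mul, hg S hS]
    have h2 : (fun ω => g S * (if g S < Z ω then (g S)⁻¹ - (Z ω)⁻¹ else 0))
        = fun ω => (if g S < Z ω then (1:ℝ) else 0) - (if g S < Z ω then g S / Z ω else 0) := by
      funext ω
      by_cases h : g S < Z ω
      · have hz : 0 < Z ω := ht.trans h
        simp only [h, if_true]
        field_simp
      · simp [h]
    rw [h2] at h1
    rw [integral_sub (hint_ind S) (hint_frac S hS), hind S 1, mul_one] at h1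
    linarith
  -- bounds relating p, b with H
  have hp_le_one : ∀ S : ℝ, (P {ω | g S < Z ω}).toReal ≤ 1 := by
    intro S
    have := prob_le_one (μ := P) (s := {ω | g S < Z ω})
    simpa using ENNReal.toReal_mono ENNReal.one_ne_top this
  have hb_nonneg : ∀ S : ℝ, 0 < S → 0 ≤ ∫ ω, (if g S < Z ω then g S / Z ω else 0) ∂P := by
    intro S hS
    apply integral_nonneg
    intro ω
    by_cases h : g S < Z ω
    · simp only [h, if_true]
      exact (hfrac_bd S hS ω h).1
    · simp [h]
  have hb_le_H : ∀ S : ℝ, 1 ≤ S →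
      (∫ ω, (if g S < Z ω then g S / Z ω else 0) ∂P)
        ≤ ∫ ω, (if 0 < Z ω then min 1 (S * Z ω)⁻¹ else 0) ∂P := by
    intro S hS1
    have hS : 0 < S := lt_of_lt_of_le one_pos hS1
    have ht := hgpos S hS
    apply integral_mono (hint_frac S hS)
    · apply hbdd _ 1 (Measurable.ite hZset
        (measurable_const.min (measurable_const.mul hZ).inv) measurable_const)
      intro ω
      by_cases h : 0 < Z ω
      · have hSZ : 0 < S * Z ω := mul_pos hS h
        have h2 : 0 ≤ min 1 (S * Z ω)⁻¹ := le_min one_pos.le (inv_pos.mpr hSZ).le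
        simp only [h, if_true, Pi.inv_apply, Pi.mul_apply, Real.norm_eq_abs, abs_of_nonneg h2]
        exact min_le_left _ _
      · simp [h]
    · intro ω
      by_cases h : g S < Z ω
      · have hz : 0 < Z ω := ht.trans h
        have hSZ : 0 < S * Z ω := mul_pos hS hz
        simp only [h, if_true, hz]
        apply le_min
        · rw [div_le_one hz]
          exact h.le
        · rw [div_eq_mul_inv, mul_inv]
          exact mul_le_mul_of_nonneg_right (hgle S hS) (inv_nonneg.mpr hz.le)
      · simp only [h, if_false]
        by_cases h2 : 0 < Z ω
        · have hSZ : 0 < S * Z ω := mul_pos hS h2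
          simp only [h2, if_true]
          exact le_min one_pos.le (inv_pos.mpr hSZ).le
        · simp [h2]
  -- more integrable helpers
  have hint_indc : ∀ S c : ℝ, Integrable (fun ω => if g S < Z ω then c else 0) P := by
    intro S c
    apply hbdd _ |c| (Measurable.ite (hA S) measurable_const measurable_const)
    intro ω
    by_cases h : g S < Z ω <;> simp [h, le_abs_self, abs_nonneg]
  have hint_indc0 : ∀ S c : ℝ, Integrable (fun ω => if g S < Z ω then 0 else c) P := by
    intro S c
    apply hbdd _ |c| (Measurable.ite (hA S) measurable_const measurable_const)
    intro ω
    by_cases h : g S < Z ω <;> simp [h, le_abs_self, abs_nonneg]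
  have hint_H : ∀ S : ℝ, 0 < S →
      Integrable (fun ω => if 0 < Z ω then min 1 (S * Z ω)⁻¹ else 0) P := by
    intro S hS
    apply hbdd _ 1 (Measurable.ite hZset
      (measurable_const.min (measurable_const.mul hZ).inv) measurable_const)
    intro ω
    by_cases h : 0 < Z ω
    · have hSZ : 0 < S * Z ω := mul_pos hS h
      have h2 : 0 ≤ min 1 (S * Z ω)⁻¹ := le_min one_pos.le (inv_pos.mpr hSZ).le
      simp only [h, if_true, Pi.inv_apply, Pi.mul_apply, Real.norm_eq_abs, abs_of_nonneg h2]
      exact min_le_left _ _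
    · simp [h]
  have hint_R : ∀ S : ℝ,
      Integrable (fun ω => if 0 < Z ω ∧ Z ω ≤ S⁻¹ then |Real.log (Z ω)| else 0) P := by
    intro S
    have hset : MeasurableSet {ω | 0 < Z ω ∧ Z ω ≤ S⁻¹} :=
      hZset.inter (measurableSet_le hZ measurable_const)
    apply hlog_int.mono' (Measurable.ite hset hlogm.abs measurable_const).aestronglyMeasurable
    filter_upwards with ω
    by_cases h : 0 < Z ω ∧ Z ω ≤ S⁻¹ <;> simp [h, abs_abs, abs_nonneg]
  have hint_logt : ∀ S : ℝ, Integrable (fun ω => if g S < Z ω then Real.log (Z ω) else 0) P := by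
    intro S
    apply hlog_int.mono' (Measurable.ite (hA S) hlogm measurable_const).aestronglyMeasurable
    filter_upwards with ω
    by_cases h : g S < Z ω <;> simp [h, le_abs_self, abs_abs, abs_nonneg, le_refl]
  -- complement indicator integral
  have hcomp : ∀ S c : ℝ, ∫ ω, (if g S < Z ω then 0 else c) ∂P
      = (1 - (P {ω | g S < Z ω}).toReal) * c := by
    intro S c
    have h1 : (fun ω => if g S < Z ω then (0:ℝ) else c)
        = fun ω => c - (if g S < Z ω then c else 0) := by
      funext ω
      by_cases h : g S < Z ω <;> simp [h]
    rw [h1, integral_sub (integrable_const c) (hint_indc S c), hind S c, integral_const]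
    simp
    ring
  -- 1 - p ≤ H
  have h1mp_le_H : ∀ S : ℝ, 1 ≤ S →
      1 - (P {ω | g S < Z ω}).toReal
        ≤ ∫ ω, (if 0 < Z ω then min 1 (S * Z ω)⁻¹ else 0) ∂P := by
    intro S hS1
    have hS : 0 < S := lt_of_lt_of_le one_pos hS1
    have h0 : 1 - (P {ω | g S < Z ω}).toReal
        = ∫ ω, (if g S < Z ω then 0 else (1:ℝ)) ∂P := by
      rw [hcomp S 1, mul_one]
    rw [h0]
    apply integral_mono_ae (hint_indc0 S 1) (hint_H S hS)
    filter_upwards [hae] with ω hz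
    by_cases h : g S < Z ω
    · have hSZ : 0 < S * Z ω := mul_pos hS hz
      simp only [h, if_false, hz, if_true]
      exact le_min one_pos.le (inv_pos.mpr hSZ).le
    · have hzS : Z ω ≤ S⁻¹ := le_trans (not_lt.mp h) (hgle S hS)
      have hSZ : S * Z ω ≤ 1 := by
        calc S * Z ω ≤ S * S⁻¹ := by nlinarith
        _ = 1 := mul_inv_cancel₀ hS.ne'
      have hSZ0 : 0 < S * Z ω := mul_pos hS hz
      have h2 : (1:ℝ) ≤ (S * Z ω)⁻¹ := by
        rw [one_le_inv_iff₀]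
        exact ⟨hSZ0, hSZ⟩
      simp only [h, if_false, hz, if_true]
      exact le_min le_rfl h2
  -- tendsto of p and b
  have hpp : Tendsto (fun S : ℝ => (P {ω | g S < Z ω}).toReal) atTop (𝓝 1) := by
    apply tendsto_of_tendsto_of_tendsto_of_le_of_le'
      (g := fun S : ℝ => 1 - ∫ ω, (if 0 < Z ω then min 1 (S * Z ω)⁻¹ else 0) ∂P)
      (h := fun _ : ℝ => (1:ℝ))
    · simpa using (tendsto_const_nhds (x := (1:ℝ))).sub hHH
    · exact tendsto_const_nhds
    · filter_upwards [eventually_ge_atTop (1:ℝ)] with S hS1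
      have := h1mp_le_H S hS1
      linarith
    · filter_upwards with S
      exact hp_le_one S
  have hbb : Tendsto (fun S : ℝ => ∫ ω, (if g S < Z ω then g S / Z ω else 0) ∂P)
      atTop (𝓝 0) := by
    apply tendsto_of_tendsto_of_tendsto_of_le_of_le' (g := fun _ : ℝ => (0:ℝ))
      (h := fun S : ℝ => ∫ ω, (if 0 < Z ω then min 1 (S * Z ω)⁻¹ else 0) ∂P)
      tendsto_const_nhds hHH
    · filter_upwards [eventually_gt_atTop (0:ℝ)] with S hS
      exact hb_nonneg S hS
    · filter_upwards [eventually_ge_atTop (1:ℝ)] with S hS1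
      exact hb_le_H S hS1
  have hA2 : Tendsto (fun S : ℝ => -((P {ω | g S < Z ω}).toReal *
      Real.log ((P {ω | g S < Z ω}).toReal
        - ∫ ω, (if g S < Z ω then g S / Z ω else 0) ∂P))) atTop (𝓝 0) := by
    have h1 : Tendsto (fun S : ℝ => (P {ω | g S < Z ω}).toReal
        - ∫ ω, (if g S < Z ω then g S / Z ω else 0) ∂P) atTop (𝓝 1) := by
      simpa using hpp.sub hbb
    have h2 := (Real.continuousAt_log one_ne_zero).tendsto.comp h1
    simp only [Real.log_one] at h2
    have h3 := (hpp.mul h2).neg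
    simpa using h3
  -- A1 bound and limit
  have hA1bd : ∀ S : ℝ, 1 ≤ S →
      |(∫ ω, (if g S < Z ω then Real.log (Z ω) else 0) ∂P) - ∫ ω, Real.log (Z ω) ∂P|
        ≤ ∫ ω, (if 0 < Z ω ∧ Z ω ≤ S⁻¹ then |Real.log (Z ω)| else 0) ∂P := by
    intro S hS1
    have hS : 0 < S := lt_of_lt_of_le one_pos hS1
    rw [← integral_sub (hint_logt S) hlogZ_int, ← Real.norm_eq_abs]
    refine le_trans (norm_integral_le_integral_norm _) ?_
    simp only [Real.norm_eq_abs]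
    apply integral_mono_ae ((hint_logt S).sub hlogZ_int).abs (hint_R S)
    filter_upwards [hae] with ω hz
    simp only [Pi.sub_apply]
    by_cases h : g S < Z ω
    · rw [if_pos h, sub_self, abs_zero]
      split_ifs with h2
      · exact abs_nonneg _
      · exact le_rfl
    · have hzS : Z ω ≤ S⁻¹ := le_trans (not_lt.mp h) (hgle S hS)
      rw [if_neg h, zero_sub, abs_neg, if_pos ⟨hz, hzS⟩]
  have hA1 : Tendsto (fun S : ℝ =>
      (∫ ω, (if g S < Z ω then Real.log (Z ω) else 0) ∂P) - ∫ ω, Real.log (Z ω) ∂P)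
      atTop (𝓝 0) := by
    apply tendsto_of_tendsto_of_tendsto_of_le_of_le'
      (g := fun S : ℝ => -∫ ω, (if 0 < Z ω ∧ Z ω ≤ S⁻¹ then |Real.log (Z ω)| else 0) ∂P)
      (h := fun S : ℝ => ∫ ω, (if 0 < Z ω ∧ Z ω ≤ S⁻¹ then |Real.log (Z ω)| else 0) ∂P)
    · simpa using hRR.neg
    · exact hRR
    · filter_upwards [eventually_ge_atTop (1:ℝ)] with S hS1
      exact (abs_le.mp (hA1bd S hS1)).1
    · filter_upwards [eventually_ge_atTop (1:ℝ)] with S hS1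
      exact (abs_le.mp (hA1bd S hS1)).2
  -- A3 limit
  have hA3 : Tendsto (fun S : ℝ => ((P {ω | g S < Z ω}).toReal - 1) * Real.log S)
      atTop (𝓝 0) := by
    apply tendsto_of_tendsto_of_tendsto_of_le_of_le'
      (g := fun S : ℝ => -∫ ω, (if 0 < Z ω ∧ Z ω ≤ S⁻¹ then |Real.log (Z ω)| else 0) ∂P)
      (h := fun _ : ℝ => (0:ℝ))
    · simpa using hRR.neg
    · exact tendsto_const_nhds
    · filter_upwards [eventually_ge_atTop (1:ℝ)] with S hS1
      have hS : 0 < S := lt_of_lt_of_le one_pos hS1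
      have h0 : (1 - (P {ω | g S < Z ω}).toReal) * Real.log S
          = ∫ ω, (if g S < Z ω then 0 else Real.log S) ∂P := (hcomp S (Real.log S)).symm
      have h1 : ∫ ω, (if g S < Z ω then 0 else Real.log S) ∂P
          ≤ ∫ ω, (if 0 < Z ω ∧ Z ω ≤ S⁻¹ then |Real.log (Z ω)| else 0) ∂P := by
        apply integral_mono_ae (hint_indc0 S _) (hint_R S)
        filter_upwards [hae] with ω hz
        by_cases h : g S < Z ω
        · simp only [h, if_true]
          split_ifs with h2
          · exact abs_nonneg _
          · exact le_rfl
        · have hzS : Z ω ≤ S⁻¹ := le_trans (not_lt.mp h) (hgle S hS)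
          have h3 : Real.log (Z ω) ≤ Real.log S⁻¹ := Real.log_le_log hz hzS
          rw [Real.log_inv] at h3
          have h4 : Real.log S ≤ |Real.log (Z ω)| :=
            le_trans (by linarith) (neg_le_abs _)
          simp only [h, if_false]
          rw [if_pos ⟨hz, hzS⟩]
          exact h4
      have h2 : (1 - (P {ω | g S < Z ω}).toReal) * Real.log S
          ≤ ∫ ω, (if 0 < Z ω ∧ Z ω ≤ S⁻¹ then |Real.log (Z ω)| else 0) ∂P := by
        rw [h0]; exact h1
      nlinarith [h2]
    · filter_upwards [eventually_ge_atTop (1:ℝ)] with S hS1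
      have hlogS : 0 ≤ Real.log S := Real.log_nonneg hS1
      have hp := hp_le_one S
      nlinarith
  -- final eventual equality
  have hfinal : ∀ᶠ S : ℝ in atTop,
      ((∫ ω, (if g S < Z ω then Real.log (Z ω / g S) else 0) ∂P)
          - ∫ ω, Real.log (1 + S * Z ω) ∂P)
        = ((∫ ω, (if g S < Z ω then Real.log (Z ω) else 0) ∂P)
              - ∫ ω, Real.log (Z ω) ∂P)
          + (-((P {ω | g S < Z ω}).toReal *
              Real.log ((P {ω | g S < Z ω}).toReal
                - ∫ ω, (if g S < Z ω then g S / Z ω else 0) ∂P)))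
          + ((P {ω | g S < Z ω}).toReal - 1) * Real.log S
          + (-∫ ω, Real.log (1 + (S * Z ω)⁻¹) ∂P) := by
    filter_upwards [eventually_ge_atTop (1:ℝ)] with S hS1
    have hS : 0 < S := lt_of_lt_of_le one_pos hS1
    have ht : 0 < g S := hgpos S hS
    have h_oa : ∫ ω, (if g S < Z ω then Real.log (Z ω / g S) else 0) ∂P
        = (∫ ω, (if g S < Z ω then Real.log (Z ω) else 0) ∂P)
          - (P {ω | g S < Z ω}).toReal * Real.log (g S) := by
      have h1 : (fun ω => if g S < Z ω then Real.log (Z ω / g S) else 0)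
          = fun ω => (if g S < Z ω then Real.log (Z ω) else 0)
              - (if g S < Z ω then Real.log (g S) else 0) := by
        funext ω
        by_cases h : g S < Z ω
        · have hz : 0 < Z ω := ht.trans h
          simp only [h, if_true]
          rw [Real.log_div hz.ne' ht.ne']
        · simp [h]
      rw [h1, integral_sub (hint_logt S) (hint_indc S _), hind S _]
    have ha4_int : Integrable (fun ω => Real.log (1 + (S * Z ω)⁻¹)) P := by
      apply (hZ_int.add hlog_int).mono'
        (Real.measurable_log.comp
          (measurable_const.add (measurable_const.mul hZ).inv)).aestronglyMeasurable
      filter_upwards [hae] with ω hz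
      simp only [Function.comp_apply, Pi.add_apply, Pi.inv_apply, Pi.mul_apply]
      have hSZ : 0 < S * Z ω := mul_pos hS hz
      have h1 : (0:ℝ) ≤ Real.log (1 + (S * Z ω)⁻¹) := by
        apply Real.log_nonneg
        have : 0 ≤ (S * Z ω)⁻¹ := (inv_pos.mpr hSZ).le
        linarith
      rw [Real.norm_eq_abs, abs_of_nonneg h1]
      have h2 : (S * Z ω)⁻¹ ≤ (Z ω)⁻¹ := by
        apply inv_anti₀ hz
        nlinarith
      have h3 : Real.log (1 + (S * Z ω)⁻¹) ≤ Real.log (1 + (Z ω)⁻¹) := by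
        apply Real.log_le_log (by positivity)
        linarith
      have h4 : Real.log (1 + (Z ω)⁻¹) = Real.log (1 + Z ω) - Real.log (Z ω) := by
        have e : 1 + (Z ω)⁻¹ = (1 + Z ω) / Z ω := by
          field_simp
          ring
        rw [e, Real.log_div (by positivity) hz.ne']
      have h5 : Real.log (1 + Z ω) ≤ Z ω := by
        have := Real.log_le_sub_one_of_pos (x := 1 + Z ω) (by positivity)
        linarith
      have h6 : -Real.log (Z ω) ≤ |Real.log (Z ω)| := neg_le_abs _
      linarith
    have h_ra : ∫ ω, Real.log (1 + S * Z ω) ∂P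
        = Real.log S + (∫ ω, Real.log (Z ω) ∂P)
          + ∫ ω, Real.log (1 + (S * Z ω)⁻¹) ∂P := by
      have h1 : ∀ᵐ ω ∂P, Real.log (1 + S * Z ω)
          = Real.log S + Real.log (Z ω) + Real.log (1 + (S * Z ω)⁻¹) := by
        filter_upwards [hae] with ω hz
        have hSZ : 0 < S * Z ω := mul_pos hS hz
        have e1 : Real.log S + Real.log (Z ω) = Real.log (S * Z ω) :=
          (Real.log_mul hS.ne' hz.ne').symm
        have e2 : Real.log (S * Z ω) + Real.log (1 + (S * Z ω)⁻¹)
            = Real.log (S * Z ω * (1 + (S * Z ω)⁻¹)) :=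
          (Real.log_mul hSZ.ne' (by positivity)).symm
        have e3 : S * Z ω * (1 + (S * Z ω)⁻¹) = 1 + S * Z ω := by
          field_simp
          ring
        rw [e1, e2, e3]
      rw [integral_congr_ae h1]
      have i1 : Integrable (fun ω => Real.log S + Real.log (Z ω)) P :=
        (integrable_const (Real.log S)).add hlogZ_int
      rw [integral_add i1 ha4_int,
        integral_add (integrable_const (Real.log S)) hlogZ_int, integral_const]
      simp
    have hlt : Real.log (g S) = Real.log ((P {ω | g S < Z ω}).toReal
        - ∫ ω, (if g S < Z ω then g S / Z ω else 0) ∂P) - Real.log S := by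
      rw [hkey S hS, Real.log_mul ht.ne' hS.ne']
      ring
    rw [h_oa, h_ra, hlt]
    ring
  have hsum := ((hA1.add hA2).add hA3).add hA4.neg
  have hsum' : Tendsto (fun S : ℝ =>
      ((∫ ω, (if g S < Z ω then Real.log (Z ω) else 0) ∂P)
            - ∫ ω, Real.log (Z ω) ∂P)
        + (-((P {ω | g S < Z ω}).toReal *
            Real.log ((P {ω | g S < Z ω}).toReal
              - ∫ ω, (if g S < Z ω then g S / Z ω else 0) ∂P)))
        + ((P {ω | g S < Z ω}).toReal - 1) * Real.log S
        + (-∫ ω, Real.log (1 + (S * Z ω)⁻¹) ∂P)) atTop (𝓝 0) := by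
    simpa using hsum
  exact Tendsto.congr' (hfinal.mono fun S h => h.symm) hsum'
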